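/- (Theorem 2, comparison of target-risk upper bounds.) Let 𝒳, 𝒴, 𝒬, 𝒵 be finite nonempty sets, let μ_1, …, μ_M (M ≥ 1) be probability measures on 𝒳 × 𝒴, let f₂ : 𝒳 → 𝒬 and k : 𝒬 → 𝒵, and set f₁ = k ∘ f₂. For each i, let ξ_i be the pushforward of μ_i under (x, y) ↦ (f₂(x), y), and let ν_i be the pushforward of μ_i under (x, y) ↦ (f₁(x), y), and suppose ν_1 = ⋯ = ν_M. Then for every real number C, the upper bound on the target risk of the hypothesis built on the domain-invariant features Z, namely sup ε_T(h₁) = Σ_{i=1}^M H_{ν_i}(Y | Z) + C, and the upper bound for the hypothesis built on the intermediate features Q, namely sup ε_T(h₂) = Σ_{i=1}^M H_{ξ_i}(Y | Q) + C, satisfy sup ε_T(h₁) − sup ε_T(h₂) ≥ σ and in particular sup ε_T(h₁) ≥ sup ε_T(h₂), where σ = Σ_{i=1}^M ( I_{ξ_i}(Q; Y) − min_{1≤j≤M} I_{ξ_j}(Q; Y) ) ≥ 0. -/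

import Mathlib

open scoped ENNReal

/-- A probability mass function on a finite type, given as a real-valued function. -/
def IsPMF {α : Type*} [Fintype α] (p : α → ℝ) : Prop :=
  (∀ a, 0 ≤ p a) ∧ ∑ a, p a = 1

/-- First marginal of a joint distribution on `X × Y`. -/
noncomputable def marg1 {X Y : Type*} [Fintype Y] (μ : X × Y → ℝ) (x : X) : ℝ :=
  ∑ y, μ (x, y)

/-- Second marginal of a joint distribution on `X × Y`. -/
noncomputable def marg2 {X Y : Type*} [Fintype X] (μ : X × Y → ℝ) (y : Y) : ℝ :=
  ∑ x, μ (x, y)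

/-- Mutual information `I_μ(X; Y)` of a joint distribution `μ` on `X × Y`;
terms with `μ p = 0` vanish since `0 * log _ = 0` (and `Real.log 0 = 0`). -/
noncomputable def mutualInfo {X Y : Type*} [Fintype X] [Fintype Y] (μ : X × Y → ℝ) : ℝ :=
  ∑ p : X × Y, μ p * Real.log (μ p / (marg1 μ p.1 * marg2 μ p.2))

/-- Entropy `H_μ(Y)` of the second marginal (with the convention `0 * log 0 = 0`). -/
noncomputable def entropy2 {X Y : Type*} [Fintype X] [Fintype Y] (μ : X × Y → ℝ) : ℝ :=
  -∑ y, marg2 μ y * Real.log (marg2 μ y)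

/-- Conditional entropy `H_μ(Y | X) = H_μ(Y) - I_μ(X; Y)`. -/
noncomputable def condEntropy2 {X Y : Type*} [Fintype X] [Fintype Y] (μ : X × Y → ℝ) : ℝ :=
  entropy2 μ - mutualInfo μ

/-- `-log t`, valued in `[0, ∞]`, with `-log 0 = ∞`. -/
noncomputable def negLog (t : ℝ) : ℝ≥0∞ :=
  if t = 0 then ⊤ else ENNReal.ofReal (-Real.log t)

/-- Expected cross-entropy risk of a stochastic classifier `g : X → Δ(Y)` under a
joint distribution `μ` on `X × Y`, valued in `[0, ∞]`. -/
noncomputable def ceRisk {X Y : Type*} [Fintype X] [Fintype Y]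
    (μ : X × Y → ℝ) (g : X → Y → ℝ) : ℝ≥0∞ :=
  ∑ p : X × Y, ENNReal.ofReal (μ p) * negLog (g p.1 p.2)

/-- Pushforward of a joint distribution `μ` on `X × Y` under `(x, y) ↦ (f x, y)`:
the joint law of `(f(X), Y)`. -/
noncomputable def push {X Y Z : Type*} [Fintype X] [DecidableEq Z]
    (f : X → Z) (μ : X × Y → ℝ) : Z × Y → ℝ :=
  fun p => ∑ x ∈ Finset.univ.filter (fun x => f x = p.1), μ (x, p.2)


section Aux

variable {Q Y Z : Type*} [Fintype Q] [Fintype Y] [Fintype Z] [DecidableEq Z]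

lemma marg2_push (f : Q → Z) (ξ : Q × Y → ℝ) : marg2 (push f ξ) = marg2 ξ := by
  funext y
  simp only [marg2, push]
  exact Finset.sum_fiberwise _ _ _

lemma entropy2_push (f : Q → Z) (ξ : Q × Y → ℝ) :
    entropy2 (push f ξ) = entropy2 ξ := by
  simp [entropy2, marg2_push]

lemma push_comp {X : Type*} [Fintype X] [DecidableEq Q]
    (f : X → Q) (g : Q → Z) (μ : X × Y → ℝ) :
    push (g ∘ f) μ = push g (push f μ) := by
  funext p
  simp only [push, Function.comp]
  rw [← Finset.sum_fiberwise (Finset.univ.filter (fun x => g (f x) = p.1)) f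
      (fun x => μ (x, p.2))]
  rw [Finset.sum_filter]
  refine Finset.sum_congr rfl fun q _ => ?_
  by_cases hq : g q = p.1
  · rw [if_pos hq]
    refine Finset.sum_congr ?_ fun _ _ => rfl
    ext x
    simp only [Finset.mem_filter, Finset.mem_univ, true_and]
    constructor
    · rintro ⟨_, h2⟩; exact h2
    · rintro h2; exact ⟨h2 ▸ hq, h2⟩
  · rw [if_neg hq]
    refine Finset.sum_eq_zero fun x hx => ?_
    simp only [Finset.mem_filter, Finset.mem_univ, true_and] at hx
    exact absurd (hx.2 ▸ hx.1) hq

lemma sum_push (f : Q → Z) (ξ : Q × Y → ℝ) :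
    ∑ p : Z × Y, push f ξ p = ∑ p : Q × Y, ξ p := by
  rw [Fintype.sum_prod_type, Fintype.sum_prod_type, Finset.sum_comm]
  have h : ∀ y, ∑ z, push f ξ (z, y) = ∑ q, ξ (q, y) := fun y => Finset.sum_fiberwise Finset.univ f (fun q => ξ (q, y))
  simp_rw [h]
  exact Finset.sum_comm

lemma isPMF_push (f : Q → Z) (ξ : Q × Y → ℝ) (h : IsPMF ξ) : IsPMF (push f ξ) :=
  ⟨fun _ => Finset.sum_nonneg fun x _ => h.1 _, by rw [sum_push]; exact h.2⟩

lemma dpi (ξ : Q × Y → ℝ) (hξ : IsPMF ξ) (f : Q → Z) :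
    mutualInfo (push f ξ) ≤ mutualInfo ξ := by
  set ν := push f ξ with hν
  have hνnn : ∀ p, 0 ≤ ν p := fun p => Finset.sum_nonneg fun x _ => hξ.1 _
  set L : Z → Y → ℝ := fun z y => Real.log (ν (z, y) / (marg1 ν z * marg2 ν y)) with hL
  have key1 : mutualInfo ν = ∑ p : Q × Y, ξ p * L (f p.1) p.2 := by
    rw [mutualInfo, Fintype.sum_prod_type, Fintype.sum_prod_type,
      ← Finset.sum_fiberwise Finset.univ f (fun q => ∑ y, ξ (q, y) * L (f q) y)]
    refine Finset.sum_congr rfl fun z _ => ?_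
    have : ∀ y, ν (z, y) * L z y
        = ∑ q ∈ Finset.univ.filter (fun q => f q = z), ξ (q, y) * L z y := by
      intro y
      rw [← Finset.sum_mul]
      rfl
    simp only [hL] at this ⊢
    simp_rw [this]
    rw [Finset.sum_comm]
    refine Finset.sum_congr rfl fun q hq => ?_
    simp only [Finset.mem_filter] at hq
    rw [hq.2]
  -- pointwise bound
  set m : Q × Y → ℝ := fun p => marg1 ξ p.1 * ν (f p.1, p.2) / marg1 ν (f p.1) with hm
  have hmnn : ∀ p, 0 ≤ m p := by
    intro p
    exact div_nonneg (mul_nonneg (Finset.sum_nonneg fun _ _ => hξ.1 _) (hνnn _))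
      (Finset.sum_nonneg fun _ _ => hνnn _)
  have pointwise : ∀ p : Q × Y,
      ξ p - m p ≤ ξ p * Real.log (ξ p / (marg1 ξ p.1 * marg2 ξ p.2)) - ξ p * L (f p.1) p.2 := by
    intro p
    by_cases hp : ξ p = 0
    · rw [hp]
      simp only [zero_mul, sub_zero, zero_sub, sub_zero]
      linarith [hmnn p]
    · have hpp : 0 < ξ p := lt_of_le_of_ne (hξ.1 p) (Ne.symm hp)
      have ha : 0 < marg1 ξ p.1 := lt_of_lt_of_le hpp
        (Finset.single_le_sum (f := fun y => ξ (p.1, y)) (fun _ _ => hξ.1 _)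
          (Finset.mem_univ p.2))
      have hb : 0 < marg2 ξ p.2 := lt_of_lt_of_le hpp
        (Finset.single_le_sum (f := fun x => ξ (x, p.2)) (fun _ _ => hξ.1 _)
          (Finset.mem_univ p.1))
      have hνp : 0 < ν (f p.1, p.2) := by
        refine lt_of_lt_of_le hpp ?_
        refine Finset.single_le_sum (f := fun q => ξ (q, p.2)) (fun _ _ => hξ.1 _) ?_
        simp
      have hA : 0 < marg1 ν (f p.1) := lt_of_lt_of_le hνp
        (Finset.single_le_sum (f := fun y => ν (f p.1, y)) (fun _ _ => hνnn _)
          (Finset.mem_univ p.2))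
      have hB : marg2 ν p.2 = marg2 ξ p.2 := by rw [hν, marg2_push]
      have hmp : 0 < m p := div_pos (mul_pos ha hνp) hA
      have hlogdiff : Real.log (ξ p / (marg1 ξ p.1 * marg2 ξ p.2)) - L (f p.1) p.2
          = Real.log (ξ p / m p) := by
        have hmp' : marg1 ξ p.1 * ν (f p.1, p.2) / marg1 ν (f p.1) ≠ 0 := hmp.ne'
        simp only [hL, hm]
        rw [hB,
          Real.log_div hp (mul_pos ha hb).ne',
          Real.log_div hνp.ne' (mul_pos hA hb).ne',
          Real.log_div hp hmp',
          Real.log_mul ha.ne' hb.ne',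
          Real.log_mul hA.ne' hb.ne',
          Real.log_div (mul_pos ha hνp).ne' hA.ne',
          Real.log_mul ha.ne' hνp.ne']
        ring
      rw [← mul_sub, hlogdiff]
      have hlog := Real.log_le_sub_one_of_pos (div_pos hmp hpp)
      have h1 : Real.log (ξ p / m p) = - Real.log (m p / ξ p) := by
        rw [← Real.log_inv]
        congr 1
        field_simp
      rw [h1]
      have h2 : ξ p * -Real.log (m p / ξ p) ≥ ξ p * -(m p / ξ p - 1) := by
        apply mul_le_mul_of_nonneg_left _ (le_of_lt hpp)
        linarith
      have h3 : ξ p * -(m p / ξ p - 1) = ξ p - m p := by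
        field_simp
        ring
      linarith
  have sumdiff : ∑ p : Q × Y, (ξ p - m p)
      ≤ mutualInfo ξ - mutualInfo ν := by
    rw [key1, mutualInfo, ← Finset.sum_sub_distrib]
    exact Finset.sum_le_sum fun p _ => pointwise p
  have hsumm : ∑ p : Q × Y, m p ≤ 1 := by
    have : ∑ p : Q × Y, m p = ∑ q, marg1 ξ q * marg1 ν (f q) / marg1 ν (f q) := by
      rw [Fintype.sum_prod_type]
      refine Finset.sum_congr rfl fun q _ => ?_
      rw [hm, marg1]
      simp only
      rw [← Finset.sum_div, ← Finset.mul_sum]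
      rfl
    rw [this]
    have h4 : ∀ q, marg1 ξ q * marg1 ν (f q) / marg1 ν (f q) ≤ marg1 ξ q := by
      intro q
      by_cases hz : marg1 ν (f q) = 0
      · rw [hz, mul_zero, zero_div]
        exact Finset.sum_nonneg fun _ _ => hξ.1 _
      · rw [mul_div_assoc, div_self hz, mul_one]
    calc ∑ q, marg1 ξ q * marg1 ν (f q) / marg1 ν (f q) ≤ ∑ q, marg1 ξ q :=
          Finset.sum_le_sum fun q _ => h4 q
      _ = 1 := by rw [← hξ.2, Fintype.sum_prod_type]; rfl
  have hsum1 : ∑ p : Q × Y, ξ p = 1 := hξ.2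
  have : 0 ≤ ∑ p : Q × Y, (ξ p - m p) := by
    rw [Finset.sum_sub_distrib, hsum1]
    linarith
  linarith

end Aux

/-- Theorem 2, comparison of target-risk upper bounds: with the feature-extraction
process factoring as `X → Q → Z` (`f₁ = k ∘ f₂`) and domain-invariant feature laws
`ν_1 = ⋯ = ν_M`, for every real `C` (the common divergence-plus-complexity term in
the Ben-David et al. bound), the target-risk upper bounds
`sup ε_T(h₁) = ∑ i, H_{ν_i}(Y | Z) + C` and `sup ε_T(h₂) = ∑ i, H_{ξ_i}(Y | Q) + C`
satisfy `sup ε_T(h₁) - sup ε_T(h₂) ≥ σ ≥ 0`, and in particular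
`sup ε_T(h₂) ≤ sup ε_T(h₁)`. -/
theorem theorem2_target_risk_bounds
    {X Y Q Z : Type*} [Fintype X] [Fintype Y] [Fintype Q] [Fintype Z]
    [Nonempty X] [Nonempty Y] [Nonempty Q] [Nonempty Z]
    [DecidableEq Q] [DecidableEq Z]
    (M : ℕ) (hM : 1 ≤ M) (μ : Fin M → X × Y → ℝ) (hμ : ∀ i, IsPMF (μ i))
    (f₂ : X → Q) (k : Q → Z)
    (hinv : ∀ i j, push (k ∘ f₂) (μ i) = push (k ∘ f₂) (μ j)) :
    ∀ C : ℝ,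
      (∑ i, (mutualInfo (push f₂ (μ i))
          - Finset.univ.inf' ⟨⟨0, hM⟩, Finset.mem_univ _⟩
              (fun j => mutualInfo (push f₂ (μ j))))
        ≤ (∑ i, condEntropy2 (push (k ∘ f₂) (μ i)) + C)
          - (∑ i, condEntropy2 (push f₂ (μ i)) + C))
      ∧ (∑ i, condEntropy2 (push f₂ (μ i)) + C
          ≤ ∑ i, condEntropy2 (push (k ∘ f₂) (μ i)) + C)
      ∧ 0 ≤ ∑ i, (mutualInfo (push f₂ (μ i))
          - Finset.univ.inf' ⟨⟨0, hM⟩, Finset.mem_univ _⟩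
              (fun j => mutualInfo (push f₂ (μ j)))) := by
  intro C
  have hξP : ∀ i, IsPMF (push f₂ (μ i)) := fun i => isPMF_push _ _ (hμ i)
  have hdpi : ∀ i, mutualInfo (push (k ∘ f₂) (μ i)) ≤ mutualInfo (push f₂ (μ i)) := by
    intro i
    rw [push_comp]
    exact dpi _ (hξP i) k
  have hent : ∀ i, entropy2 (push (k ∘ f₂) (μ i)) = entropy2 (push f₂ (μ i)) := by
    intro i
    rw [push_comp]
    exact entropy2_push _ _
  have hle : ∀ i j, mutualInfo (push (k ∘ f₂) (μ i)) ≤ mutualInfo (push f₂ (μ j)) := by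
    intro i j
    rw [hinv i j]
    exact hdpi j
  have hinf : ∀ i, mutualInfo (push (k ∘ f₂) (μ i))
      ≤ Finset.univ.inf' ⟨⟨0, hM⟩, Finset.mem_univ _⟩
          (fun j => mutualInfo (push f₂ (μ j))) := by
    intro i
    exact Finset.le_inf' _ _ fun j _ => hle i j
  refine ⟨?_, ?_, ?_⟩
  · have : (∑ i, condEntropy2 (push (k ∘ f₂) (μ i)) + C)
        - (∑ i, condEntropy2 (push f₂ (μ i)) + C)
        = ∑ i, (condEntropy2 (push (k ∘ f₂) (μ i)) - condEntropy2 (push f₂ (μ i))) := by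
      rw [Finset.sum_sub_distrib]
      ring
    rw [this]
    refine Finset.sum_le_sum fun i _ => ?_
    simp only [condEntropy2, hent i]
    have := hinf i
    linarith
  · have : ∀ i, condEntropy2 (push f₂ (μ i)) ≤ condEntropy2 (push (k ∘ f₂) (μ i)) := by
      intro i
      simp only [condEntropy2, hent i]
      linarith [hdpi i]
    exact add_le_add_left (Finset.sum_le_sum fun i _ => this i) C
  · refine Finset.sum_nonneg fun i _ => ?_
    rw [sub_nonneg]
    exact Finset.inf'_le _ (Finset.mem_univ i)
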